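/- Let G be a connected graph containing an even cycle C_{2k} = u_1u_2⋯u_{2k}u_1 such that G − E(C_{2k}) has exactly 2k connected components, with G_i the component containing u_i and m_i = |E(G_i)|. Then for each edge u_iu_{i+1} of the cycle (indices mod 2k), the set M_{u_i}(u_iu_{i+1}|G) equals E(G_i) ∪ E(G_{i−1}) ∪ ⋯ ∪ E(G_{i−k+1}) together with the k−1 cycle edges {u_iu_{i−1}, u_{i−1}u_{i−2}, …, u_{i−k+2}u_{i−k+1}}, and symmetrically for M_{u_{i+1}}. -/

import Mathlib

open scoped Classical
open Finset

noncomputable def eDist {V : Type*} (G : SimpleGraph V) (f : Sym2 V) (w : V) : ℕ :=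
  Sym2.lift ⟨fun a b => min (G.dist a w) (G.dist b w), fun _ _ => min_comm _ _⟩ f

noncomputable def mCloser {V : Type*} (G : SimpleGraph V) [Fintype V] (u v : V) : ℕ :=
  (G.edgeFinset.filter fun f => eDist G f u < eDist G f v).card

noncomputable def mEqui {V : Type*} (G : SimpleGraph V) [Fintype V] (u v : V) : ℕ :=
  (G.edgeFinset.filter fun f => eDist G f u = eDist G f v).card

/-- The edge revised Szeged index (each edge `uv` is counted once; the double sum over
ordered adjacent pairs counts it twice, whence the division by 2). -/
noncomputable def szRevE {V : Type*} (G : SimpleGraph V) [Fintype V] : ℚ :=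
  (∑ u : V, ∑ v : V, if G.Adj u v then
      ((mCloser G u v : ℚ) + (mEqui G u v : ℚ) / 2) *
        ((mCloser G v u : ℚ) + (mEqui G u v : ℚ) / 2)
    else 0) / 2

/-- The edges of `G` lying in the connected component `c`. -/
noncomputable def compEdges {V : Type*} (G : SimpleGraph V) [Fintype V]
    (c : G.ConnectedComponent) : Finset (Sym2 V) :=
  G.edgeFinset.filter fun f => ∀ x ∈ f, G.connectedComponentMk x = c




private lemma mod_ite1 (n t : ℕ) (h : t < n) : (t + 1) % n = if t + 1 = n then 0 else t + 1 := by
  split_ifs with h1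
  · simp [h1]
  · exact Nat.mod_eq_of_lt (by omega)

private lemma mod_ite2 (n t : ℕ) (h : t < n) : (t + (n - 1)) % n = if t = 0 then n - 1 else t - 1 := by
  split_ifs with h1
  · subst h1
    have h2 : n - 1 < n := by omega
    simpa using Nat.mod_eq_of_lt h2
  · have h2 : t + (n - 1) = (t - 1) + n := by omega
    rw [h2, Nat.add_mod_right, Nat.mod_eq_of_lt (by omega)]

private lemma mod_ite3 (n t : ℕ) (h : t < n) : (n - t) % n = if t = 0 then 0 else n - t := by
  split_ifs with h1
  · simp [h1]
  · exact Nat.mod_eq_of_lt (by omega)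

private lemma dist_lower_bound {V : Type*} {G : SimpleGraph V} (f : V → ℕ)
    (hf : ∀ x y, G.Adj x y → f x ≤ f y + 1) {t : V} (ht : f t = 0)
    {x : V} (hr : G.Reachable x t) : f x ≤ G.dist x t := by
  obtain ⟨p, hp⟩ := hr.exists_walk_length_eq_dist
  rw [← hp]
  clear hp hr
  induction p with
  | nil => simp [ht]
  | @cons a b c h q ih =>
    have := hf a b h
    simp only [SimpleGraph.Walk.length_cons]
    omega

/-- for an even cycle `C_{2k} = u_0 u_1 ⋯ u_{2k-1} u_0` in a connected graph `G`
such that `G − E(C_{2k})` has exactly `2k` connected components, the set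
`M_{u_i}(u_i u_{i+1}|G)` consists of the edges of the components
`G_i, G_{i-1}, …, G_{i-k+1}` together with the `k − 1` cycle edges
`u_i u_{i-1}, …, u_{i-k+2} u_{i-k+1}`, and symmetrically for `M_{u_{i+1}}`. -/
theorem stmt5 {V : Type*} [Fintype V] (G : SimpleGraph V) (hG : G.Connected)
    (k : ℕ) (hk : 2 ≤ k) (u : ZMod (2 * k) → V) (hinj : Function.Injective u)
    (hadj : ∀ i, G.Adj (u i) (u (i + 1)))
    (S : Set (Sym2 V)) (hS : S = {f | ∃ i, f = s(u i, u (i + 1))})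
    (hcomp : Nat.card (G.deleteEdges S).ConnectedComponent = 2 * k)
    (i : ZMod (2 * k)) :
    (G.edgeFinset.filter fun f => eDist G f (u i) < eDist G f (u (i + 1))) =
      ((Finset.range k).biUnion fun j =>
          compEdges (G.deleteEdges S)
            ((G.deleteEdges S).connectedComponentMk (u (i - (j : ZMod (2 * k)))))) ∪
        ((Finset.range (k - 1)).image fun j =>
          s(u (i - (j : ZMod (2 * k))), u (i - (j : ZMod (2 * k)) - 1))) ∧
    (G.edgeFinset.filter fun f => eDist G f (u (i + 1)) < eDist G f (u i)) =
      ((Finset.range k).biUnion fun j =>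
          compEdges (G.deleteEdges S)
            ((G.deleteEdges S).connectedComponentMk (u (i + 1 + (j : ZMod (2 * k)))))) ∪
        ((Finset.range (k - 1)).image fun j =>
          s(u (i + 1 + (j : ZMod (2 * k))), u (i + 2 + (j : ZMod (2 * k)))))  := by
  haveI : NeZero (2 * k) := ⟨by omega⟩
  set H := G.deleteEdges S with hHdef
  have hHle : H ≤ G := SimpleGraph.deleteEdges_le S
  have hSmem : ∀ a : ZMod (2*k), s(u a, u (a+1)) ∈ S := by
    intro a; rw [hS]; exact ⟨a, rfl⟩
  have hSshape : ∀ {x y : V}, s(x,y) ∈ S →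
      ∃ b, (x = u b ∧ y = u (b+1)) ∨ (x = u (b+1) ∧ y = u b) := by
    intro x y hxy
    rw [hS] at hxy
    obtain ⟨b, hb⟩ := hxy
    rw [Sym2.eq_iff] at hb
    exact ⟨b, hb⟩
  -- every vertex reaches some cycle vertex in H
  have hreach : ∀ x : V, ∃ j, H.Reachable x (u j) := by
    intro x
    have key : ∀ {a c : V}, G.Walk a c → ∀ j : ZMod (2*k), c = u j →
        ∃ j', H.Reachable a (u j') := by
      intro a c w
      induction w with
      | nil =>
        intro j hj
        exact ⟨j, by rw [← hj]⟩
      | @cons a b c h p ih =>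
        intro j hj
        obtain ⟨j', hj'⟩ := ih j hj
        by_cases hmem : s(a, b) ∈ S
        · obtain ⟨b', hb'⟩ := hSshape hmem
          rcases hb' with ⟨h1, _⟩ | ⟨h1, _⟩
          · exact ⟨b', by rw [h1]⟩
          · exact ⟨b' + 1, by rw [h1]⟩
        · have hadj' : H.Adj a b := by
            rw [hHdef, SimpleGraph.deleteEdges_adj]
            exact ⟨h, hmem⟩
          exact ⟨j', hadj'.reachable.trans hj'⟩
    obtain ⟨w⟩ := hG x (u 0)
    exact key w 0 rfl
  have hbij : Function.Bijective (fun j : ZMod (2*k) => H.connectedComponentMk (u j)) := by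
    rw [Nat.bijective_iff_surjective_and_card]
    refine ⟨?_, by rw [Nat.card_zmod, hcomp]⟩
    intro comp
    induction comp using SimpleGraph.ConnectedComponent.ind with
    | _ x =>
      obtain ⟨j, hj⟩ := hreach x
      exact ⟨j, (SimpleGraph.ConnectedComponent.sound hj).symm⟩
  let e : ZMod (2*k) ≃ H.ConnectedComponent := Equiv.ofBijective _ hbij
  set ι : V → ZMod (2*k) := fun x => e.symm (H.connectedComponentMk x) with hιdef
  have hcι : ∀ x : V, H.connectedComponentMk (u (ι x)) = H.connectedComponentMk x :=
    fun x => e.apply_symm_apply _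
  have hιu : ∀ j, ι (u j) = j := fun j => e.symm_apply_apply j
  have hmkiff : ∀ (x : V) (c : ZMod (2*k)),
      H.connectedComponentMk x = H.connectedComponentMk (u c) ↔ ι x = c := by
    intro x c
    constructor
    · intro h
      have h2 : e.symm (H.connectedComponentMk x) = e.symm (H.connectedComponentMk (u c)) :=
        congrArg e.symm h
      exact h2.trans (hιu c)
    · intro h
      calc H.connectedComponentMk x = e (ι x) := (e.apply_symm_apply _).symm
        _ = e c := by rw [h]
        _ = H.connectedComponentMk (u c) := rfl
  have hHreach : ∀ x : V, H.Reachable x (u (ι x)) :=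
    fun x => (SimpleGraph.ConnectedComponent.eq.mp (hcι x)).symm
  set dH : V → ℕ := fun x => H.dist x (u (ι x)) with hdHdef
  set dC : ZMod (2*k) → ZMod (2*k) → ℕ :=
    fun a b => min (b - a).val (2*k - (b - a).val) with hdCdef
  -- distances along the cycle
  have hstep : ∀ a : ZMod (2*k), G.dist (u a) (u (a+1)) ≤ 1 := by
    intro a
    simpa using SimpleGraph.dist_le (hadj a).toWalk
  have hwalkn : ∀ (a : ZMod (2*k)) (m : ℕ), G.dist (u a) (u (a + m)) ≤ m := by
    intro a m
    induction m with
    | zero => simp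
    | succ m ih =>
      have h2 := hstep (a + m)
      have h3 := hG.dist_triangle (u := u a) (v := u (a + m)) (w := u (a + m + 1))
      have hcast : (a + ((m+1 : ℕ) : ZMod (2*k))) = a + m + 1 := by push_cast; ring
      rw [hcast]
      omega
  have hdC_le : ∀ a b : ZMod (2*k), G.dist (u a) (u b) ≤ dC a b := by
    intro a b
    refine le_min ?_ ?_
    · have h1 := hwalkn a (b - a).val
      rwa [ZMod.natCast_zmod_val, show a + (b - a) = b from by ring] at h1
    · have h1 := hwalkn b (a - b).val
      rw [ZMod.natCast_zmod_val, show b + (a - b) = a from by ring,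
        SimpleGraph.dist_comm] at h1
      refine h1.trans ?_
      rw [show a - b = -(b - a) from by ring, ZMod.neg_val']
      exact Nat.mod_le _ _
  have hdHu : ∀ a : ZMod (2*k), dH (u a) = 0 := by
    intro a
    rw [hdHdef]
    simp only [hιu]
    exact SimpleGraph.dist_self
  have hdistG_le_H : ∀ (x y : V), H.Reachable x y → G.dist x y ≤ H.dist x y := by
    intro x y h
    obtain ⟨p, hp⟩ := h.exists_walk_length_eq_dist
    calc G.dist x y ≤ (p.mapLe hHle).length := SimpleGraph.dist_le _
      _ = p.length := by simp
      _ = H.dist x y := hp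
  -- THE key distance formula
  have hkey : ∀ (x : V) (j : ZMod (2*k)), G.dist x (u j) = dH x + dC (ι x) j := by
    intro x j
    apply le_antisymm
    · calc G.dist x (u j) ≤ G.dist x (u (ι x)) + G.dist (u (ι x)) (u j) := hG.dist_triangle
        _ ≤ dH x + dC (ι x) j :=
          Nat.add_le_add (hdistG_le_H _ _ (hHreach x)) (hdC_le _ _)
    · refine dist_lower_bound (fun y => dH y + dC (ι y) j) ?_ ?_ (hG x (u j))
      · intro x' y' hxy'
        by_cases hmem : s(x', y') ∈ S
        · obtain ⟨b, hb⟩ := hSshape hmem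
          have harith : ∀ a : ZMod (2*k), dC a j ≤ dC (a+1) j + 1 ∧ dC (a+1) j ≤ dC a j + 1 := by
            intro a
            have h1 : (j - a).val < 2*k := ZMod.val_lt _
            have hvn1 : (-1 : ZMod (2*k)).val = 2*k - 1 := by
              rw [ZMod.neg_val', ZMod.val_one'' (by omega)]
              exact Nat.mod_eq_of_lt (by omega)
            have h3 : (j - (a+1)).val = ((j - a).val + (2*k - 1)) % (2*k) := by
              rw [show j - (a+1) = (j - a) + (-1) from by ring, ZMod.val_add, hvn1]
            rw [hdCdef]
            simp only
            rw [h3, mod_ite2 _ _ h1]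
            split_ifs with h0 <;> omega
          rcases hb with ⟨hx', hy'⟩ | ⟨hx', hy'⟩
          · show dH x' + dC (ι x') j ≤ dH y' + dC (ι y') j + 1
            rw [hx', hy', hdHu, hdHu, hιu, hιu]
            simpa using (harith b).1
          · show dH x' + dC (ι x') j ≤ dH y' + dC (ι y') j + 1
            rw [hx', hy', hdHu, hdHu, hιu, hιu]
            simpa using (harith b).2
        · have hadj' : H.Adj x' y' := by
            rw [hHdef, SimpleGraph.deleteEdges_adj]
            exact ⟨hxy', hmem⟩
          have hieq : ι x' = ι y' :=
            (hmkiff x' (ι y')).mp ((SimpleGraph.ConnectedComponent.sound hadj'.reachable).trans (hcι y').symm)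
          have hdd : dH x' ≤ dH y' + 1 := by
            obtain ⟨p, hp⟩ := (hHreach y').exists_walk_length_eq_dist
            have h2 := SimpleGraph.dist_le (SimpleGraph.Walk.cons hadj' p)
            rw [SimpleGraph.Walk.length_cons, hp] at h2
            rw [hdHdef]
            simp only [hieq]
            exact h2
          show dH x' + dC (ι x') j ≤ dH y' + dC (ι y') j + 1
          rw [hieq]
          omega
      · show dH (u j) + dC (ι (u j)) j = 0
        rw [hdHu j, hιu, hdCdef]
        simp
  have hdist_u : ∀ a j : ZMod (2*k), G.dist (u a) (u j) = dC a j := by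
    intro a j
    rw [hkey, hdHu, hιu]
    simp
  -- arithmetic helpers
  have hvn1 : (-1 : ZMod (2*k)).val = 2*k - 1 := by
    rw [ZMod.neg_val', ZMod.val_one'' (by omega)]
    exact Nat.mod_eq_of_lt (by omega)
  have hv_add1 : ∀ a b : ZMod (2*k), (b + 1 - a).val = ((b - a).val + 1) % (2*k) := by
    intro a b
    rw [show b + 1 - a = (b - a) + 1 from by ring, ZMod.val_add, ZMod.val_one'' (by omega)]
  have hv_sub1 : ∀ a b : ZMod (2*k), (b - (a + 1)).val = ((b - a).val + (2*k - 1)) % (2*k) := by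
    intro a b
    rw [show b - (a+1) = (b - a) + (-1) from by ring, ZMod.val_add, hvn1]
  -- comparisons for component edges
  have hcmp : ∀ a : ZMod (2*k),
      (dC a i < dC a (i+1) ↔ (i - a).val < k) ∧ dC a i ≠ dC a (i+1) := by
    intro a
    have h1 : (i - a).val < 2*k := ZMod.val_lt _
    rw [hdCdef]
    simp only
    rw [hv_add1 a i, mod_ite1 _ _ h1]
    split_ifs with h0 <;> omega
  -- comparisons for cycle edges
  have hcmpS1 : ∀ b : ZMod (2*k),
      (min (dC b i) (dC (b+1) i) < min (dC b (i+1)) (dC (b+1) (i+1)) ↔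
        (1 ≤ (i - b).val ∧ (i - b).val < k)) := by
    intro b
    have h1 : (i - b).val < 2*k := ZMod.val_lt _
    rw [hdCdef]
    simp only
    rw [hv_add1 b i, hv_sub1 b i, show i + 1 - (b + 1) = i - b from by ring,
      mod_ite1 _ _ h1, mod_ite2 _ _ h1]
    split_ifs <;> omega
  have hcmpS2 : ∀ b : ZMod (2*k),
      (min (dC b (i+1)) (dC (b+1) (i+1)) < min (dC b i) (dC (b+1) i) ↔
        k < (i - b).val) := by
    intro b
    have h1 : (i - b).val < 2*k := ZMod.val_lt _
    rw [hdCdef]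
    simp only
    rw [hv_add1 b i, hv_sub1 b i, show i + 1 - (b + 1) = i - b from by ring,
      mod_ite1 _ _ h1, mod_ite2 _ _ h1]
    split_ifs <;> omega
  have hcmp2 : ∀ a : ZMod (2*k), (dC a (i+1) < dC a i ↔ k ≤ (i - a).val) := by
    intro a
    obtain ⟨h1, h2⟩ := hcmp a
    constructor
    · intro h
      by_contra h'
      push_neg at h'
      exact absurd (h1.mpr h') (by omega)
    · intro h
      rcases Nat.lt_trichotomy (dC a (i+1)) (dC a i) with h'|h'|h'
      · exact h'
      · exact absurd h'.symm h2
      · exact absurd (h1.mp h') (by omega)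
  -- index correspondences
  have hval_shift : ∀ (b : ZMod (2*k)) (m : ℕ), m < 2*k →
      (b = i - (m : ZMod (2*k)) ↔ (i - b).val = m) := by
    intro b m hm
    constructor
    · rintro rfl
      rw [show i - (i - (m : ZMod (2*k))) = (m : ZMod (2*k)) from by ring,
        ZMod.val_natCast_of_lt hm]
    · intro h
      rw [← h, ZMod.natCast_zmod_val]
      ring
  have hcastneg : ∀ m : ℕ, m < 2*k →
      ((2*k - 1 - m : ℕ) : ZMod (2*k)) = -(1 + (m : ZMod (2*k))) := by
    intro m hm
    have h1 : 1 + m ≤ 2*k := by omega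
    rw [show 2*k - 1 - m = 2*k - (1+m) from by omega, Nat.cast_sub h1, ZMod.natCast_self,
      zero_sub]
    push_cast
    ring
  have hval_shift2 : ∀ (b : ZMod (2*k)) (m : ℕ), m < 2*k →
      (b = i + 1 + (m : ZMod (2*k)) ↔ (i - b).val = 2*k - 1 - m) := by
    intro b m hm
    have h2 : 2*k - 1 - m < 2*k := by omega
    have key : b = i + 1 + (m : ZMod (2*k)) ↔ b = i - ((2*k - 1 - m : ℕ) : ZMod (2*k)) := by
      rw [hcastneg m hm]
      constructor
      · rintro rfl; ring
      · rintro rfl; ring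
    rw [key, hval_shift b _ h2]
  have hidx1 : ∀ b : ZMod (2*k),
      ((∃ j' < k, b = i - (j' : ZMod (2*k))) ↔ (i - b).val < k) := by
    intro b
    constructor
    · rintro ⟨j', hj', hb⟩
      rw [(hval_shift b j' (by omega)).mp hb]
      exact hj'
    · intro h
      exact ⟨(i - b).val, h, (hval_shift b _ (ZMod.val_lt _)).mpr rfl⟩
  have hidx1' : ∀ b : ZMod (2*k),
      ((∃ j' < k - 1, b = i - (j' : ZMod (2*k)) - 1) ↔
        (1 ≤ (i - b).val ∧ (i - b).val < k)) := by
    intro b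
    have hcast : ∀ j' : ℕ, i - (j' : ZMod (2*k)) - 1 = i - ((j' + 1 : ℕ) : ZMod (2*k)) := by
      intro j'; push_cast; ring
    constructor
    · rintro ⟨j', hj', hb⟩
      rw [hcast j'] at hb
      rw [(hval_shift b (j'+1) (by omega)).mp hb]
      omega
    · rintro ⟨h1, h2⟩
      refine ⟨(i - b).val - 1, by omega, ?_⟩
      rw [hcast, show (i - b).val - 1 + 1 = (i - b).val from by omega]
      exact (hval_shift b _ (ZMod.val_lt _)).mpr rfl
  have hidx2 : ∀ b : ZMod (2*k),
      ((∃ j' < k, b = i + 1 + (j' : ZMod (2*k))) ↔ k ≤ (i - b).val) := by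
    intro b
    constructor
    · rintro ⟨j', hj', hb⟩
      rw [(hval_shift2 b j' (by omega)).mp hb]
      omega
    · intro h
      have h1 : (i - b).val < 2*k := ZMod.val_lt _
      refine ⟨2*k - 1 - (i - b).val, by omega, ?_⟩
      rw [hval_shift2 b _ (by omega)]
      omega
  have hidx2' : ∀ b : ZMod (2*k),
      ((∃ j' < k - 1, b = i + 1 + (j' : ZMod (2*k))) ↔ k < (i - b).val) := by
    intro b
    constructor
    · rintro ⟨j', hj', hb⟩
      rw [(hval_shift2 b j' (by omega)).mp hb]
      omega
    · intro h
      have h1 : (i - b).val < 2*k := ZMod.val_lt _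
      refine ⟨2*k - 1 - (i - b).val, by omega, ?_⟩
      rw [hval_shift2 b _ (by omega)]
      omega
  -- Sym2 helpers
  have h2ne : (2 : ZMod (2*k)) ≠ 0 := by
    intro h
    have h2 : ((2 : ℕ) : ZMod (2*k)) = 0 := by exact_mod_cast h
    rw [ZMod.natCast_eq_zero_iff] at h2
    have := Nat.le_of_dvd (by norm_num) h2
    omega
  have hitem1 : ∀ (j' b : ZMod (2*k)),
      (s(u (i - j'), u (i - j' - 1)) = s(u b, u (b+1))) ↔ b = i - j' - 1 := by
    intro j' b
    rw [Sym2.eq_iff]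
    constructor
    · rintro (⟨h1, h2⟩ | ⟨h1, h2⟩)
      · have e1 := hinj h1
        have e2 := hinj h2
        exact absurd (by linear_combination e1 - e2) h2ne
      · exact (hinj h2).symm
    · rintro rfl
      right
      exact ⟨congrArg u (by ring), rfl⟩
  have hitem2 : ∀ (j' b : ZMod (2*k)),
      (s(u (i + 1 + j'), u (i + 2 + j')) = s(u b, u (b+1))) ↔ b = i + 1 + j' := by
    intro j' b
    rw [Sym2.eq_iff]
    constructor
    · rintro (⟨h1, h2⟩ | ⟨h1, h2⟩)
      · exact (hinj h1).symm
      · have e1 := hinj h1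
        have e2 := hinj h2
        exact absurd (by linear_combination e2 - e1) h2ne
    · rintro rfl
      left
      exact ⟨rfl, congrArg u (by ring)⟩
  have hitemS1 : ∀ j' : ZMod (2*k), s(u (i - j'), u (i - j' - 1)) ∈ S := by
    intro j'
    rw [hS]
    refine ⟨i - j' - 1, ?_⟩
    rw [Sym2.eq_iff]
    right
    exact ⟨congrArg u (by ring), rfl⟩
  have hitemS2 : ∀ j' : ZMod (2*k), s(u (i + 1 + j'), u (i + 2 + j')) ∈ S := by
    intro j'
    rw [hS]
    refine ⟨i + 1 + j', ?_⟩
    rw [Sym2.eq_iff]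
    left
    exact ⟨rfl, congrArg u (by ring)⟩
  have hcompEdges_mem : ∀ (x y : V) (comp : H.ConnectedComponent),
      s(x,y) ∈ compEdges H comp ↔
        (H.Adj x y ∧ H.connectedComponentMk x = comp ∧ H.connectedComponentMk y = comp) := by
    intro x y comp
    simp only [compEdges, Finset.mem_filter, SimpleGraph.mem_edgeFinset, SimpleGraph.mem_edgeSet]
    constructor
    · rintro ⟨h1, h2⟩
      exact ⟨h1, h2 x (by simp), h2 y (by simp)⟩
    · rintro ⟨h1, h2, h3⟩
      refine ⟨h1, ?_⟩
      intro z hz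
      rcases Sym2.mem_iff.mp hz with rfl | rfl <;> assumption
  have hcompsub : ∀ (comp : H.ConnectedComponent) (f : Sym2 V),
      f ∈ compEdges H comp → f ∈ G.edgeFinset := by
    intro comp f hf
    have h1 := (Finset.mem_filter.mp hf).1
    simp only [SimpleGraph.mem_edgeFinset] at h1 ⊢
    exact SimpleGraph.edgeSet_mono hHle h1
  have hSnotH : ∀ {x y : V}, s(x,y) ∈ S → ∀ comp, s(x,y) ∉ compEdges H comp := by
    intro x y hxy comp hmem
    have h1 := ((hcompEdges_mem x y comp).mp hmem).1
    rw [hHdef, SimpleGraph.deleteEdges_adj] at h1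
    exact h1.2 hxy
  have heDist : ∀ (x y w : V), eDist G s(x,y) w = min (G.dist x w) (G.dist y w) :=
    fun _ _ _ => rfl
  -- main characterization, part 1
  have main1 : ∀ x y : V, G.Adj x y →
      ((eDist G s(x,y) (u i) < eDist G s(x,y) (u (i+1))) ↔
        ((∃ j' < k, s(x,y) ∈ compEdges H
            (H.connectedComponentMk (u (i - (j' : ZMod (2*k)))))) ∨
         (∃ j' < k-1,
            s(u (i - (j' : ZMod (2*k))), u (i - (j' : ZMod (2*k)) - 1)) = s(x,y)))) := by
    intro x y hxy
    rw [heDist, heDist]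
    by_cases hmem : s(x,y) ∈ S
    · obtain ⟨b, hb⟩ := hSshape hmem
      have hfb : s(x, y) = s(u b, u (b+1)) := by
        rcases hb with ⟨h1, h2⟩ | ⟨h1, h2⟩
        · rw [h1, h2]
        · rw [h1, h2]
          exact Sym2.eq_swap
      have hiff1 : (∃ j' < k-1,
          s(u (i - (j' : ZMod (2*k))), u (i - (j' : ZMod (2*k)) - 1)) = s(x,y)) ↔
          (1 ≤ (i - b).val ∧ (i - b).val < k) := by
        rw [← hidx1' b]
        constructor
        · rintro ⟨j', hj', hfe⟩
          exact ⟨j', hj', (hitem1 _ b).mp (hfe.trans hfb)⟩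
        · rintro ⟨j', hj', hbj⟩
          exact ⟨j', hj', ((hitem1 ((j' : ZMod (2*k))) b).mpr hbj).trans hfb.symm⟩
      have hcompfalse : ¬ (∃ j' < k, s(x,y) ∈ compEdges H
          (H.connectedComponentMk (u (i - (j' : ZMod (2*k)))))) := by
        rintro ⟨j', _, hc⟩
        exact hSnotH hmem _ hc
      have hd : ∀ w : V, min (G.dist x w) (G.dist y w)
          = min (G.dist (u b) w) (G.dist (u (b+1)) w) := by
        intro w
        rcases hb with ⟨h1, h2⟩ | ⟨h1, h2⟩
        · rw [h1, h2]
        · rw [h1, h2, min_comm]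
      rw [hd]
      rw [hd]
      rw [hdist_u, hdist_u, hdist_u, hdist_u]
      rw [hcmpS1 b, hiff1]
      constructor
      · exact fun h => Or.inr h
      · rintro (h | h)
        · exact absurd h hcompfalse
        · exact h
    · have hadjH : H.Adj x y := by
        rw [hHdef, SimpleGraph.deleteEdges_adj]
        exact ⟨hxy, hmem⟩
      have hieq : ι x = ι y := (hmkiff x (ι y)).mp
        ((SimpleGraph.ConnectedComponent.sound hadjH.reachable).trans (hcι y).symm)
      have hcycfalse : ¬ (∃ j' < k-1,
          s(u (i - (j' : ZMod (2*k))), u (i - (j' : ZMod (2*k)) - 1)) = s(x,y)) := by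
        rintro ⟨j', _, hfe⟩
        rw [← hfe] at hmem
        exact hmem (hitemS1 _)
      have hcompiff : (∃ j' < k, s(x,y) ∈ compEdges H
          (H.connectedComponentMk (u (i - (j' : ZMod (2*k)))))) ↔ (i - ι x).val < k := by
        rw [← hidx1 (ι x)]
        constructor
        · rintro ⟨j', hj', hc⟩
          exact ⟨j', hj', (hmkiff x _).mp ((hcompEdges_mem x y _).mp hc).2.1⟩
        · rintro ⟨j', hj', hx⟩
          refine ⟨j', hj', ?_⟩
          rw [hcompEdges_mem]
          exact ⟨hadjH, (hmkiff x _).mpr hx, (hmkiff y _).mpr (hieq ▸ hx)⟩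
      rw [hkey x i, hkey x (i+1), hkey y i, hkey y (i+1), ← hieq,
        min_add_add_right, min_add_add_right, Nat.add_lt_add_iff_left,
        (hcmp (ι x)).1, hcompiff]
      constructor
      · exact fun h => Or.inl h
      · rintro (h | h)
        · exact h
        · exact absurd h hcycfalse
  -- main characterization, part 2
  have main2 : ∀ x y : V, G.Adj x y →
      ((eDist G s(x,y) (u (i+1)) < eDist G s(x,y) (u i)) ↔
        ((∃ j' < k, s(x,y) ∈ compEdges H
            (H.connectedComponentMk (u (i + 1 + (j' : ZMod (2*k)))))) ∨
         (∃ j' < k-1,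
            s(u (i + 1 + (j' : ZMod (2*k))), u (i + 2 + (j' : ZMod (2*k)))) = s(x,y)))) := by
    intro x y hxy
    rw [heDist, heDist]
    by_cases hmem : s(x,y) ∈ S
    · obtain ⟨b, hb⟩ := hSshape hmem
      have hfb : s(x, y) = s(u b, u (b+1)) := by
        rcases hb with ⟨h1, h2⟩ | ⟨h1, h2⟩
        · rw [h1, h2]
        · rw [h1, h2]
          exact Sym2.eq_swap
      have hiff2 : (∃ j' < k-1,
          s(u (i + 1 + (j' : ZMod (2*k))), u (i + 2 + (j' : ZMod (2*k)))) = s(x,y)) ↔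
          k < (i - b).val := by
        rw [← hidx2' b]
        constructor
        · rintro ⟨j', hj', hfe⟩
          exact ⟨j', hj', (hitem2 _ b).mp (hfe.trans hfb)⟩
        · rintro ⟨j', hj', hbj⟩
          exact ⟨j', hj', ((hitem2 ((j' : ZMod (2*k))) b).mpr hbj).trans hfb.symm⟩
      have hcompfalse : ¬ (∃ j' < k, s(x,y) ∈ compEdges H
          (H.connectedComponentMk (u (i + 1 + (j' : ZMod (2*k)))))) := by
        rintro ⟨j', _, hc⟩
        exact hSnotH hmem _ hc
      have hd : ∀ w : V, min (G.dist x w) (G.dist y w)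
          = min (G.dist (u b) w) (G.dist (u (b+1)) w) := by
        intro w
        rcases hb with ⟨h1, h2⟩ | ⟨h1, h2⟩
        · rw [h1, h2]
        · rw [h1, h2, min_comm]
      rw [hd]
      rw [hd]
      rw [hdist_u, hdist_u, hdist_u, hdist_u]
      rw [hcmpS2 b, hiff2]
      constructor
      · exact fun h => Or.inr h
      · rintro (h | h)
        · exact absurd h hcompfalse
        · exact h
    · have hadjH : H.Adj x y := by
        rw [hHdef, SimpleGraph.deleteEdges_adj]
        exact ⟨hxy, hmem⟩
      have hieq : ι x = ι y := (hmkiff x (ι y)).mp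
        ((SimpleGraph.ConnectedComponent.sound hadjH.reachable).trans (hcι y).symm)
      have hcycfalse : ¬ (∃ j' < k-1,
          s(u (i + 1 + (j' : ZMod (2*k))), u (i + 2 + (j' : ZMod (2*k)))) = s(x,y)) := by
        rintro ⟨j', _, hfe⟩
        rw [← hfe] at hmem
        exact hmem (hitemS2 _)
      have hcompiff : (∃ j' < k, s(x,y) ∈ compEdges H
          (H.connectedComponentMk (u (i + 1 + (j' : ZMod (2*k)))))) ↔ k ≤ (i - ι x).val := by
        rw [← hidx2 (ι x)]
        constructor
        · rintro ⟨j', hj', hc⟩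
          exact ⟨j', hj', (hmkiff x _).mp ((hcompEdges_mem x y _).mp hc).2.1⟩
        · rintro ⟨j', hj', hx⟩
          refine ⟨j', hj', ?_⟩
          rw [hcompEdges_mem]
          exact ⟨hadjH, (hmkiff x _).mpr hx, (hmkiff y _).mpr (hieq ▸ hx)⟩
      rw [hkey x i, hkey x (i+1), hkey y i, hkey y (i+1), ← hieq,
        min_add_add_right, min_add_add_right, Nat.add_lt_add_iff_left,
        hcmp2 (ι x), hcompiff]
      constructor
      · exact fun h => Or.inl h
      · rintro (h | h)
        · exact h
        · exact absurd h hcycfalse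
    -- final assembly
  have hmemdo : ∀ (m : ℕ) (a : ZMod (2*k)),
      (a ∈ (do let x ← Finset.range m; pure ((x : ℕ) : ZMod (2*k)) : Finset (ZMod (2*k)))) ↔
        ∃ j' < m, a = (j' : ZMod (2*k)) := by
    intro m a
    have h1 := bind_pure_comp (fun x : ℕ => ((x : ℕ) : ZMod (2*k))) (Finset.range m)
    rw [h1, Finset.fmap_def]
    simp only [Finset.mem_image, Finset.mem_range]
    constructor
    · rintro ⟨j', hj', hje⟩
      exact ⟨j', hj', hje.symm⟩
    · rintro ⟨j', hj', hje⟩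
      exact ⟨j', hj', hje.symm⟩
  have himg1 : ∀ f : Sym2 V,
      (f ∈ ((Finset.range (k - 1)).image fun j =>
          s(u (i - (j : ZMod (2 * k))), u (i - (j : ZMod (2 * k)) - 1)))) ↔
        (∃ j' < k - 1,
          s(u (i - (j' : ZMod (2*k))), u (i - (j' : ZMod (2*k)) - 1)) = f) := by
    intro f
    rw [Finset.mem_image]
    constructor
    · rintro ⟨a, ha, hfa⟩
      obtain ⟨j', hj', rfl⟩ := (hmemdo _ _).mp ha
      exact ⟨j', hj', hfa⟩
    · rintro ⟨j', hj', heq⟩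
      exact ⟨(j' : ZMod (2*k)), (hmemdo _ _).mpr ⟨j', hj', rfl⟩, heq⟩
  have himg2 : ∀ f : Sym2 V,
      (f ∈ ((Finset.range (k - 1)).image fun j =>
          s(u (i + 1 + (j : ZMod (2 * k))), u (i + 2 + (j : ZMod (2 * k)))))) ↔
        (∃ j' < k - 1,
          s(u (i + 1 + (j' : ZMod (2*k))), u (i + 2 + (j' : ZMod (2*k)))) = f) := by
    intro f
    rw [Finset.mem_image]
    constructor
    · rintro ⟨a, ha, hfa⟩
      obtain ⟨j', hj', rfl⟩ := (hmemdo _ _).mp ha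
      exact ⟨j', hj', hfa⟩
    · rintro ⟨j', hj', heq⟩
      exact ⟨(j' : ZMod (2*k)), (hmemdo _ _).mpr ⟨j', hj', rfl⟩, heq⟩
  have hedgeFinsetAdj : ∀ {x y : V}, s(x,y) ∈ G.edgeFinset ↔ G.Adj x y := by
    intro x y
    rw [SimpleGraph.mem_edgeFinset, SimpleGraph.mem_edgeSet]
  constructor
  · ext f
    induction f using Sym2.ind with
    | _ x y =>
      simp only [Finset.mem_filter, Finset.mem_union, Finset.mem_biUnion, Finset.mem_range]
      constructor
      · rintro ⟨hfe, hlt⟩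
        rcases (main1 x y (hedgeFinsetAdj.mp hfe)).mp hlt with h | ⟨j', hj', heq⟩
        · exact Or.inl h
        · exact Or.inr ((himg1 _).mpr ⟨j', hj', heq⟩)
      · intro h
        have h' : (∃ j' < k, s(x,y) ∈ compEdges H
            (H.connectedComponentMk (u (i - (j' : ZMod (2*k)))))) ∨
            (∃ j' < k-1,
              s(u (i - (j' : ZMod (2*k))), u (i - (j' : ZMod (2*k)) - 1)) = s(x,y)) := by
          rcases h with h | h
          · exact Or.inl h
          · exact Or.inr ((himg1 _).mp h)
        have hfe : s(x,y) ∈ G.edgeFinset := by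
          rcases h' with ⟨j', _, hmem⟩ | ⟨j', _, heq⟩
          · exact hcompsub _ _ hmem
          · rw [← heq, hedgeFinsetAdj]
            have h1 := (hadj (i - (j' : ZMod (2*k)) - 1)).symm
            rwa [show i - (j' : ZMod (2*k)) - 1 + 1 = i - (j' : ZMod (2*k)) from by ring] at h1
        exact ⟨hfe, (main1 x y (hedgeFinsetAdj.mp hfe)).mpr h'⟩
  · ext f
    induction f using Sym2.ind with
    | _ x y =>
      simp only [Finset.mem_filter, Finset.mem_union, Finset.mem_biUnion, Finset.mem_range]
      constructor
      · rintro ⟨hfe, hlt⟩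
        rcases (main2 x y (hedgeFinsetAdj.mp hfe)).mp hlt with h | ⟨j', hj', heq⟩
        · exact Or.inl h
        · exact Or.inr ((himg2 _).mpr ⟨j', hj', heq⟩)
      · intro h
        have h' : (∃ j' < k, s(x,y) ∈ compEdges H
            (H.connectedComponentMk (u (i + 1 + (j' : ZMod (2*k)))))) ∨
            (∃ j' < k-1,
              s(u (i + 1 + (j' : ZMod (2*k))), u (i + 2 + (j' : ZMod (2*k)))) = s(x,y)) := by
          rcases h with h | h
          · exact Or.inl h
          · exact Or.inr ((himg2 _).mp h)
        have hfe : s(x,y) ∈ G.edgeFinset := by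
          rcases h' with ⟨j', _, hmem⟩ | ⟨j', _, heq⟩
          · exact hcompsub _ _ hmem
          · rw [← heq, hedgeFinsetAdj]
            have h1 := hadj (i + 1 + (j' : ZMod (2*k)))
            rwa [show i + 1 + (j' : ZMod (2*k)) + 1 = i + 2 + (j' : ZMod (2*k)) from by ring] at h1
        exact ⟨hfe, (main2 x y (hedgeFinsetAdj.mp hfe)).mpr h'⟩
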